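/- (Laplace transform of the noncentral chi-square density.) Let δ > 0, z > 0 and λ ≥ 0. Define the modified Bessel function of order ν by I_ν(x) = (x/2)^ν ∑_{n=0}^{∞} (x/2)^{2n} / (n! Γ(ν + n + 1)), and the noncentral chi-square density with δ degrees of freedom and noncentrality parameter z by f_{δ,z}(x) = (1/2) e^{−(x+z)/2} (x/z)^{δ/4 − 1/2} I_{δ/2 − 1}(√(x z)) for x > 0. Then ∫₀^{∞} e^{−λ x} f_{δ,z}(x) dx = (2λ + 1)^{−δ/2} exp( −λ z / (2λ + 1) ). In particular (λ = 0), f_{δ,z} is a probability density on (0,∞). -/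

import Mathlib

open MeasureTheory

/-- Modified Bessel function of order `ν`:
`I_ν(x) = (x/2)^ν ∑_{n=0}^∞ (x/2)^{2n} / (n! Γ(ν + n + 1))`. -/
noncomputable def besselI (ν x : ℝ) : ℝ :=
  (x / 2) ^ ν * ∑' n : ℕ, (x / 2) ^ (2 * n) / ((n.factorial : ℝ) * Real.Gamma (ν + n + 1))

/-- Noncentral chi-square density with `δ` degrees of freedom and noncentrality
parameter `z`: `f_{δ,z}(x) = (1/2) e^{−(x+z)/2} (x/z)^{δ/4 − 1/2} I_{δ/2−1}(√(xz))`. -/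
noncomputable def ncChiSqPDF (δ z x : ℝ) : ℝ :=
  (1 / 2) * Real.exp (-(x + z) / 2) * (x / z) ^ (δ / 4 - 1 / 2) *
    besselI (δ / 2 - 1) (Real.sqrt (x * z))

section aux

variable {δ z lam : ℝ}

/-- Pointwise series expansion of the integrand. -/
lemma ncChiSq_expand (hδ : 0 < δ) (hz : 0 < z) {x : ℝ} (hx : 0 < x) :
    Real.exp (-lam * x) * ncChiSqPDF δ z x
      = ∑' n : ℕ, (Real.exp (-z/2) * (2:ℝ) ^ (-(δ/2)) * (z/4)^n /
          ((n.factorial : ℝ) * Real.Gamma (δ/2 + n))) *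
        (x ^ (δ/2 + (n:ℝ) - 1) * Real.exp (-((lam + 1/2) * x))) := by
  have hxz : (0:ℝ) ≤ x * z := by positivity
  have e1 : ∀ n : ℕ, (Real.sqrt (x*z)/2) ^ (2*n) / ((n.factorial:ℝ) * Real.Gamma (δ/2 - 1 + n + 1))
      = (x*z/4)^n / ((n.factorial:ℝ) * Real.Gamma (δ/2 + n)) := by
    intro n
    rw [pow_mul, div_pow, Real.sq_sqrt hxz, show δ/2-1+(n:ℝ)+1 = δ/2+n by ring]
    norm_num
  have e2 : (x/z) ^ (δ/4 - 1/2) * (Real.sqrt (x*z)/2) ^ (δ/2-1)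
      = x ^ (δ/2-1) * (2:ℝ) ^ (-(δ/2-1)) := by
    rw [Real.div_rpow (Real.sqrt_nonneg _) (by norm_num : (0:ℝ) ≤ 2), Real.sqrt_eq_rpow,
      ← Real.rpow_mul hxz, show (1/2:ℝ)*(δ/2-1) = δ/4-1/2 by ring, mul_div_assoc',
      ← Real.mul_rpow (by positivity) hxz, show x/z*(x*z) = x^(2:ℕ) by field_simp,
      ← Real.rpow_natCast x 2, ← Real.rpow_mul hx.le,
      show ((2:ℕ):ℝ)*(δ/4-1/2) = δ/2-1 by push_cast; ring,
      Real.rpow_neg (by norm_num : (0:ℝ) ≤ 2)]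
    ring
  have e4 : (1/2:ℝ) * 2^(-(δ/2-1)) = (2:ℝ)^(-(δ/2)) := by
    rw [show (1/2:ℝ) = (2:ℝ)^(-1:ℝ) by
        rw [Real.rpow_neg_one]; norm_num,
      ← Real.rpow_add two_pos]
    ring_nf
  have e5 : Real.exp (-lam*x) * Real.exp (-(x+z)/2)
      = Real.exp (-z/2) * Real.exp (-((lam+1/2)*x)) := by
    rw [← Real.exp_add, ← Real.exp_add]; congr 1; ring
  have hxn : ∀ n : ℕ, x ^ (δ/2 + (n:ℝ) - 1) = x ^ (δ/2-1) * x^n := by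
    intro n
    rw [← Real.rpow_natCast x n, ← Real.rpow_add hx, show δ/2-1+(n:ℝ) = δ/2 + (n:ℝ) - 1 by ring]
  unfold ncChiSqPDF besselI
  calc Real.exp (-lam * x) * ((1/2) * Real.exp (-(x + z) / 2) * (x/z) ^ (δ/4 - 1/2) *
        ((Real.sqrt (x*z)/2) ^ (δ/2 - 1) *
          ∑' n : ℕ, (Real.sqrt (x*z)/2) ^ (2*n) / ((n.factorial:ℝ) * Real.Gamma (δ/2-1 + n + 1))))
      = (Real.exp (-lam*x) * Real.exp (-(x+z)/2)) * ((1/2) *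
          ((x/z) ^ (δ/4 - 1/2) * (Real.sqrt (x*z)/2) ^ (δ/2 - 1))) *
          ∑' n : ℕ, (Real.sqrt (x*z)/2) ^ (2*n) / ((n.factorial:ℝ) * Real.Gamma (δ/2-1 + n + 1)) := by
        ring
    _ = (Real.exp (-z/2) * Real.exp (-((lam+1/2)*x))) * ((2:ℝ)^(-(δ/2)) * x ^ (δ/2-1)) *
          ∑' n : ℕ, (x*z/4)^n / ((n.factorial:ℝ) * Real.Gamma (δ/2 + n)) := by
        rw [e5, e2, tsum_congr e1,
          show (1/2:ℝ) * (x^(δ/2-1) * 2^(-(δ/2-1))) = (2:ℝ)^(-(δ/2)) * x^(δ/2-1) by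
            rw [← e4]; ring]
    _ = _ := by
        rw [← tsum_mul_left]
        refine tsum_congr fun n => ?_
        rw [hxn n, show x*z/4 = x*(z/4) by ring, mul_pow]
        ring

/-- The Laplace transform identity. -/
lemma ncChiSq_laplace_aux (hδ : 0 < δ) (hz : 0 < z) (hlam : 0 ≤ lam) :
    (∫ x in Set.Ioi (0 : ℝ), Real.exp (-lam * x) * ncChiSqPDF δ z x) =
      (2 * lam + 1) ^ (-(δ / 2)) * Real.exp (-lam * z / (2 * lam + 1)) := by
  set b : ℝ := lam + 1/2 with hbdef
  have hb : 0 < b := by rw [hbdef]; linarith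
  have hb' : (2:ℝ)*lam + 1 ≠ 0 := by linarith
  set C : ℕ → ℝ := fun n => Real.exp (-z/2) * (2:ℝ) ^ (-(δ/2)) * (z/4)^n /
      ((n.factorial : ℝ) * Real.Gamma (δ/2 + n)) with hC
  set g : ℕ → ℝ → ℝ := fun n x => C n * (x ^ (δ/2 + (n:ℝ) - 1) * Real.exp (-(b * x))) with hg
  have hΓpos : ∀ n : ℕ, 0 < Real.Gamma (δ/2 + n) := by
    intro n
    apply Real.Gamma_pos_of_pos
    have : (0:ℝ) ≤ n := Nat.cast_nonneg n
    linarith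
  have hCpos : ∀ n, 0 ≤ C n := by
    intro n
    apply div_nonneg (by positivity)
    exact mul_nonneg (Nat.cast_nonneg _) (hΓpos n).le
  -- integrability of each term
  have hint : ∀ n : ℕ, IntegrableOn
      (fun x : ℝ => x ^ (δ/2 + (n:ℝ) - 1) * Real.exp (-(b * x))) (Set.Ioi 0) := by
    intro n
    have h1 : (-1:ℝ) < δ/2 + (n:ℝ) - 1 := by
      have : (0:ℝ) ≤ n := Nat.cast_nonneg n
      linarith
    have := integrableOn_rpow_mul_exp_neg_mul_rpow (p := 1) (s := δ/2 + (n:ℝ) - 1) h1 one_pos hb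
    simpa [Real.rpow_one, neg_mul] using this
  have hgint : ∀ n : ℕ, IntegrableOn (g n) (Set.Ioi 0) := fun n => (hint n).const_mul _
  -- value of each term integral
  have hval : ∀ n : ℕ, (∫ x in Set.Ioi (0:ℝ), g n x)
      = (Real.exp (-z/2) * (2*lam+1) ^ (-(δ/2))) * ((z/(4*b))^n / (n.factorial : ℝ)) := by
    intro n
    have ha : (0:ℝ) < δ/2 + (n:ℝ) := by
      have : (0:ℝ) ≤ n := Nat.cast_nonneg n
      linarith
    have key : (∫ x in Set.Ioi (0:ℝ), x ^ (δ/2 + (n:ℝ) - 1) * Real.exp (-(b * x)))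
        = (1/b) ^ (δ/2 + (n:ℝ)) * Real.Gamma (δ/2 + (n:ℝ)) :=
      Real.integral_rpow_mul_exp_neg_mul_Ioi ha hb
    rw [hg, MeasureTheory.integral_const_mul, key]
    have h2 : (2:ℝ)^(-(δ/2)) * (1/b)^(δ/2) = (2*lam+1) ^ (-(δ/2)) := by
      rw [Real.rpow_neg (by norm_num : (0:ℝ) ≤ 2),
        Real.rpow_neg (by linarith : (0:ℝ) ≤ 2*lam+1),
        ← Real.inv_rpow (by norm_num : (0:ℝ) ≤ 2),
        ← Real.mul_rpow (by norm_num) (by positivity),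
        show (2:ℝ)⁻¹ * (1/b) = (2*lam+1)⁻¹ by
          rw [one_div, ← mul_inv, show (2:ℝ)*b = 2*lam+1 from by rw [hbdef]; ring],
        Real.inv_rpow (by linarith : (0:ℝ) ≤ 2*lam+1)]
    rw [Real.rpow_add (by positivity : (0:ℝ) < 1/b), Real.rpow_natCast, hC, ← h2,
      show z/(4*b) = (z/4)*(1/b) from by rw [div_mul_div_comm, mul_one], mul_pow]
    have hΓ := (hΓpos n).ne'
    have hN : ((n.factorial : ℝ)) ≠ 0 := Nat.cast_ne_zero.mpr n.factorial_ne_zero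
    field_simp
  -- measurability
  have hmeas : ∀ n : ℕ, AEStronglyMeasurable (g n) (volume.restrict (Set.Ioi (0:ℝ))) := by
    intro n
    exact ((hgint n).aestronglyMeasurable)
  -- summability in ℝ≥0∞
  have hnn : ∀ n : ℕ, ∀ᵐ x ∂(volume.restrict (Set.Ioi (0:ℝ))), 0 ≤ g n x := by
    intro n
    filter_upwards [ae_restrict_mem measurableSet_Ioi] with x hx
    have hx' : (0:ℝ) < x := hx
    rw [hg]
    have := hCpos n
    positivity
  have hsummable : Summable (fun n : ℕ =>
      (Real.exp (-z/2) * (2*lam+1) ^ (-(δ/2))) * ((z/(4*b))^n / (n.factorial : ℝ))) :=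
    (Real.summable_pow_div_factorial (z/(4*b))).mul_left _
  have hsum' : (∑' n : ℕ, ∫⁻ x in Set.Ioi (0:ℝ), ‖g n x‖₊) ≠ ⊤ := by
    have heach : ∀ n : ℕ, (∫⁻ x in Set.Ioi (0:ℝ), ‖g n x‖₊)
        = ENNReal.ofReal ((Real.exp (-z/2) * (2*lam+1) ^ (-(δ/2))) *
            ((z/(4*b))^n / (n.factorial : ℝ))) := by
      intro n
      rw [← hval n,
        show (∫⁻ x in Set.Ioi (0:ℝ), ‖g n x‖₊) = ∫⁻ x in Set.Ioi (0:ℝ), ENNReal.ofReal (g n x)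
          from lintegral_congr_ae (by
            filter_upwards [hnn n] with x hx
            exact Real.enorm_eq_ofReal hx)]
      exact (ofReal_integral_eq_lintegral_ofReal (hgint n) (hnn n)).symm
    rw [tsum_congr heach, ← ENNReal.ofReal_tsum_of_nonneg
      (fun n => by positivity) hsummable]
    exact ENNReal.ofReal_ne_top
  -- put it together
  have hpt : Set.EqOn (fun x => Real.exp (-lam * x) * ncChiSqPDF δ z x)
      (fun x => ∑' n : ℕ, g n x) (Set.Ioi 0) := by
    intro x hx
    exact ncChiSq_expand hδ hz hx
  rw [setIntegral_congr_fun measurableSet_Ioi hpt, integral_tsum hmeas hsum',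
    tsum_congr hval, tsum_mul_left,
    show (∑' n : ℕ, (z/(4*b))^n / ((n.factorial : ℝ))) = Real.exp (z/(4*b)) by
      rw [Real.exp_eq_exp_ℝ, NormedSpace.exp_eq_tsum_div],
    mul_comm (Real.exp (-z/2)) _, mul_assoc, ← Real.exp_add,
    show -z/2 + z/(4*b) = -lam * z / (2*lam+1) by
      rw [hbdef]; field_simp; ring]

end aux

/-- Laplace transform of the noncentral chi-square density:
`∫₀^∞ e^{−λx} f_{δ,z}(x) dx = (2λ+1)^{−δ/2} exp(−λz/(2λ+1))`; in particular (`λ = 0`)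
`f_{δ,z}` is a probability density on `(0,∞)`. -/
theorem ncChiSq_laplace (δ z lam : ℝ) (hδ : 0 < δ) (hz : 0 < z) (hlam : 0 ≤ lam) :
    (∫ x in Set.Ioi (0 : ℝ), Real.exp (-lam * x) * ncChiSqPDF δ z x) =
      (2 * lam + 1) ^ (-(δ / 2)) * Real.exp (-lam * z / (2 * lam + 1)) ∧
    (∀ x : ℝ, 0 < x → 0 ≤ ncChiSqPDF δ z x) ∧
    (∫ x in Set.Ioi (0 : ℝ), ncChiSqPDF δ z x) = 1 := by
  refine ⟨ncChiSq_laplace_aux hδ hz hlam, ?_, ?_⟩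
  · intro x hx
    unfold ncChiSqPDF besselI
    have h1 : (0:ℝ) ≤ (x/z) ^ (δ/4 - 1/2) := Real.rpow_nonneg (by positivity) _
    have h2 : (0:ℝ) ≤ (Real.sqrt (x*z)/2) ^ (δ/2 - 1) :=
      Real.rpow_nonneg (by positivity) _
    have h3 : (0:ℝ) ≤ ∑' n : ℕ, (Real.sqrt (x*z)/2) ^ (2*n) /
        ((n.factorial : ℝ) * Real.Gamma (δ/2 - 1 + n + 1)) := by
      apply tsum_nonneg
      intro n
      apply div_nonneg (by positivity)
      apply mul_nonneg (Nat.cast_nonneg _)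
      apply (Real.Gamma_pos_of_pos ?_).le
      have : (0:ℝ) ≤ n := Nat.cast_nonneg n
      linarith
    positivity
  · have h := ncChiSq_laplace_aux (lam := 0) hδ hz le_rfl
    simpa using h
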